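/- arXiv:1502.07095 — 2 statements merged into one kernel-verified Lean document; each statement's English description precedes it below -/
import Mathlib

section
/- With respect to the Fischer inner product on ℂ[x_1,...,x_n], if q is a homogeneous polynomial of degree m ≥ 1, then the polynomial ring decomposes as an orthogonal direct sum ℂ[x] = q·ℂ[x] ⊕ ker q*(∂_x); equivalently, every polynomial p can be written uniquely as p = q·p_1 + h with q*(∂_x)h = 0. -/
open MvPolynomial

/-- `∂_{x_i}` on `ℂ[x_1,…,x_n]`. -/
noncomputable def opD (n : ℕ) (i : Fin n) : Module.End ℂ (MvPolynomial (Fin n) ℂ) :=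
  (pderiv i).toLinearMap

/-- The monomial differential operator `∂^m = ∂_{x_1}^{m_1} ⋯ ∂_{x_n}^{m_n}`. -/
noncomputable def monOp (n : ℕ) (m : Fin n →₀ ℕ) : Module.End ℂ (MvPolynomial (Fin n) ℂ) :=
  ((List.finRange n).map fun i => opD n i ^ m i).prod

/-- The constant-coefficient differential operator `p(∂_x)` associated to a polynomial `p`. -/
noncomputable def diffOp (n : ℕ) (p : MvPolynomial (Fin n) ℂ) :
    Module.End ℂ (MvPolynomial (Fin n) ℂ) :=
  ∑ m ∈ p.support, p.coeff m • monOp n m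

/-- `p*`, the polynomial with complex-conjugated coefficients. -/
noncomputable def pstar (n : ℕ) (p : MvPolynomial (Fin n) ℂ) : MvPolynomial (Fin n) ℂ :=
  MvPolynomial.map (starRingEnd ℂ) p

/-- The Fischer inner product `⟨p, q⟩ = (p*(∂_x) q)(0)`. -/
noncomputable def fischer (n : ℕ) (p q : MvPolynomial (Fin n) ℂ) : ℂ :=
  constantCoeff (diffOp n (pstar n p) q)

lemma opD_commute (n : ℕ) (i j : Fin n) : Commute (opD n i) (opD n j) := by
  apply LinearMap.ext
  intro p
  induction p using MvPolynomial.induction_on' with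
  | monomial s a =>
    show pderiv i (pderiv j _) = pderiv j (pderiv i _)
    rcases eq_or_ne i j with rfl | hij
    · rfl
    · simp only [pderiv_monomial, Finsupp.tsub_apply, Finsupp.single_apply,
        if_neg hij, if_neg (Ne.symm hij), Nat.sub_zero]
      rw [tsub_tsub, tsub_tsub, add_comm, mul_right_comm]
  | add p q hp hq =>
    show pderiv i (pderiv j (p + q)) = pderiv j (pderiv i (p + q))
    simp only [map_add]
    exact congrArg₂ (· + ·) hp hq

lemma opD_pow_monomial (n : ℕ) (i : Fin n) (k : ℕ) (s : Fin n →₀ ℕ) (c : ℂ) :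
    (opD n i ^ k) (monomial s c) =
      ((s i).descFactorial k : ℂ) • monomial (s - Finsupp.single i k) c := by
  induction k with
  | zero => simp
  | succ k ih =>
    rw [pow_succ', Module.End.mul_apply, ih, map_smul]
    show (((s i).descFactorial k : ℕ) : ℂ) • pderiv i _ = _
    rw [pderiv_monomial]
    have h1 : (s - Finsupp.single i k) i = s i - k := by
      simp [Finsupp.tsub_apply]
    rw [h1, tsub_tsub, ← Finsupp.single_add, Nat.descFactorial_succ]
    rw [smul_monomial, smul_monomial]
    congr 1
    simp only [smul_eq_mul, Nat.cast_mul]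
    ring

lemma listProd_monomial (n : ℕ) (a : Fin n →₀ ℕ) (b : Fin n →₀ ℕ) (c : ℂ)
    (l : List (Fin n)) (hl : l.Nodup) :
    ((l.map fun i => opD n i ^ a i).prod) (monomial b c) =
      ((∏ i ∈ l.toFinset, (b i).descFactorial (a i) : ℕ) : ℂ) •
        monomial (b - ∑ i ∈ l.toFinset, Finsupp.single i (a i)) c := by
  induction l with
  | nil => simp
  | cons i t ih =>
    have hit : i ∉ t := (List.nodup_cons.mp hl).1
    have ht : t.Nodup := (List.nodup_cons.mp hl).2
    rw [List.map_cons, List.prod_cons, Module.End.mul_apply, ih ht, map_smul,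
      opD_pow_monomial]
    have hbi : (b - ∑ j ∈ t.toFinset, Finsupp.single j (a j)) i = b i := by
      rw [Finsupp.tsub_apply]
      have : (∑ j ∈ t.toFinset, Finsupp.single j (a j)) i = 0 := by
        rw [Finsupp.finset_sum_apply]
        apply Finset.sum_eq_zero
        intro j hj
        rw [Finsupp.single_apply, if_neg]
        intro h; exact hit (h ▸ List.mem_toFinset.mp hj)
      rw [this, Nat.sub_zero]
    rw [hbi, smul_smul, tsub_tsub]
    rw [List.toFinset_cons, Finset.prod_insert (by simp [hit]),
      Finset.sum_insert (by simp [hit])]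
    rw [add_comm ((Finsupp.single i (a i)))]
    congr 1
    push_cast; ring

lemma sum_univ_single (n : ℕ) (a : Fin n →₀ ℕ) :
    ∑ i : Fin n, Finsupp.single i (a i) = a := by
  ext j
  rw [Finsupp.finset_sum_apply, Finset.sum_eq_single j]
  · simp
  · intro i _ hij; simp [Finsupp.single_apply, hij]
  · simp

lemma monOp_monomial (n : ℕ) (a b : Fin n →₀ ℕ) (c : ℂ) :
    monOp n a (monomial b c) =
      ((∏ i : Fin n, (b i).descFactorial (a i) : ℕ) : ℂ) • monomial (b - a) c := by
  rw [monOp, listProd_monomial n a b c _ (List.nodup_finRange n), List.toFinset_finRange,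
    sum_univ_single]

lemma constantCoeff_monOp_monomial (n : ℕ) (a b : Fin n →₀ ℕ) (c : ℂ) :
    constantCoeff (monOp n a (monomial b c)) =
      if a = b then ((∏ i : Fin n, (a i).factorial : ℕ) : ℂ) * c else 0 := by
  rw [monOp_monomial]
  rw [show ((((∏ i : Fin n, (b i).descFactorial (a i) : ℕ) : ℂ)) • monomial (b - a) c)
      = monomial (b - a) (((∏ i : Fin n, (b i).descFactorial (a i) : ℕ) : ℂ) * c) by
      rw [smul_monomial]; rfl, constantCoeff_monomial]
  rcases eq_or_ne a b with rfl | hab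
  · rw [if_pos (by simp), if_pos rfl]
    simp [Nat.descFactorial_self]
  · rw [if_neg hab]
    by_cases hle : ∀ i, a i ≤ b i
    · have hsub : b - a ≠ 0 := by
        intro h
        apply hab
        ext i
        have := congrArg (fun f => f i) h
        simp only [Finsupp.tsub_apply, Finsupp.coe_zero, Pi.zero_apply] at this
        have h2 := hle i
        omega
      rw [if_neg hsub]
    · push_neg at hle
      obtain ⟨i, hi⟩ := hle
      have : ∏ j : Fin n, (b j).descFactorial (a j) = 0 :=
        Finset.prod_eq_zero (Finset.mem_univ i)
          (Nat.descFactorial_eq_zero_iff_lt.mpr (by omega))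
      rw [this]
      rcases eq_or_ne (b-a) (0 : Fin n →₀ ℕ) with h|h <;> simp [h]

lemma diffOp_monomial (n : ℕ) (a : Fin n →₀ ℕ) (c : ℂ) :
    diffOp n (monomial a c) = c • monOp n a := by
  rcases eq_or_ne c 0 with rfl | hc
  · simp [diffOp]
  · rw [diffOp, support_monomial, if_neg hc, Finset.sum_singleton, coeff_monomial, if_pos rfl]

lemma listProd_mul (n : ℕ) (a b : Fin n →₀ ℕ) (l : List (Fin n)) :
    ((l.map fun i => opD n i ^ (a i + b i)).prod) =
      ((l.map fun i => opD n i ^ a i).prod) * ((l.map fun i => opD n i ^ b i).prod) := by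
  induction l with
  | nil => simp
  | cons i t ih =>
    rw [List.map_cons, List.prod_cons, List.map_cons, List.prod_cons,
      List.map_cons, List.prod_cons, ih, pow_add]
    have hc : Commute (opD n i ^ b i) ((t.map fun j => opD n j ^ a j).prod) := by
      apply Commute.list_prod_right
      intro x hx
      obtain ⟨j, _, rfl⟩ := List.mem_map.mp hx
      exact (opD_commute n i j).pow_pow _ _
    rw [mul_assoc, mul_assoc, ← mul_assoc (opD n i ^ b i), hc.eq, mul_assoc]

lemma monOp_add (n : ℕ) (a b : Fin n →₀ ℕ) :
    monOp n (a + b) = monOp n a * monOp n b := by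
  rw [monOp, monOp, monOp]
  have : ∀ i : Fin n, (a + b) i = a i + b i := fun i => rfl
  simp only [this]
  exact listProd_mul n a b _

lemma diffOp_add (n : ℕ) (p q : MvPolynomial (Fin n) ℂ) :
    diffOp n (p + q) = diffOp n p + diffOp n q := by
  classical
  have : ∀ r : MvPolynomial (Fin n) ℂ,
      diffOp n r = Finsupp.sum (AddMonoidAlgebra.coeff r) (fun m c => c • monOp n m) := by
    intro r; rfl
  rw [this, this, this, AddMonoidAlgebra.coeff_add]
  exact Finsupp.sum_add_index (by simp) (by intros; rw [add_smul])

lemma diffOp_mul (n : ℕ) (p q : MvPolynomial (Fin n) ℂ) :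
    diffOp n (p * q) = diffOp n p * diffOp n q := by
  induction p using MvPolynomial.induction_on' with
  | monomial a c =>
    induction q using MvPolynomial.induction_on' with
    | monomial b d =>
      rw [monomial_mul, diffOp_monomial, diffOp_monomial, diffOp_monomial, monOp_add,
        smul_mul_smul_comm]
    | add q r hq hr =>
      rw [mul_add, diffOp_add, hq, hr, diffOp_add, mul_add]
  | add p r hp hr =>
    rw [add_mul, diffOp_add, hp, hr, diffOp_add, add_mul]

lemma pstar_mul (n : ℕ) (p q : MvPolynomial (Fin n) ℂ) :
    pstar n (p * q) = pstar n p * pstar n q := map_mul _ p q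

lemma fischer_adjoint (n : ℕ) (q a h : MvPolynomial (Fin n) ℂ) :
    fischer n (q * a) h = fischer n a (diffOp n (pstar n q) h) := by
  rw [fischer, fischer, mul_comm q a, pstar_mul, diffOp_mul, Module.End.mul_apply]

lemma support_pstar (n : ℕ) (p : MvPolynomial (Fin n) ℂ) :
    (pstar n p).support = p.support :=
  support_map_of_injective p (RingHom.injective _)

lemma coeff_pstar (n : ℕ) (p : MvPolynomial (Fin n) ℂ) (a : Fin n →₀ ℕ) :
    coeff a (pstar n p) = starRingEnd ℂ (coeff a p) := coeff_map _ _ _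

lemma fischer_self (n : ℕ) (p : MvPolynomial (Fin n) ℂ) :
    fischer n p p = ((∑ a ∈ p.support,
      (∏ i : Fin n, (a i).factorial : ℕ) * Complex.normSq (coeff a p) : ℝ) : ℂ) := by
  rw [fischer, diffOp, support_pstar, LinearMap.sum_apply, map_sum]
  have hsum : ∀ a ∈ p.support,
      constantCoeff ((coeff a (pstar n p) • monOp n a) p) =
        ((∏ i : Fin n, (a i).factorial : ℕ) : ℂ) * Complex.normSq (coeff a p) := by
    intro a _
    rw [LinearMap.smul_apply, constantCoeff_smul, coeff_pstar, smul_eq_mul]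
    have hp : (monOp n a) p = ∑ b ∈ p.support, monOp n a (monomial b (coeff b p)) := by
      conv_lhs => rw [p.as_sum]
      rw [map_sum]
    rw [hp, map_sum, Finset.sum_congr rfl
      (fun b _ => constantCoeff_monOp_monomial n a b (coeff b p))]
    rcases Finset.mem_coe.mpr ‹a ∈ p.support› with _
    rw [Finset.sum_ite_eq p.support a (fun b => ((∏ i : Fin n, (a i).factorial : ℕ) : ℂ) * coeff b p)]
    rw [if_pos ‹a ∈ p.support›]
    rw [← mul_assoc, mul_comm (starRingEnd ℂ (coeff a p)), mul_assoc,
      mul_comm (starRingEnd ℂ (coeff a p)), Complex.mul_conj]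
  rw [Finset.sum_congr rfl hsum]
  push_cast
  rfl

lemma fischer_self_eq_zero (n : ℕ) (p : MvPolynomial (Fin n) ℂ)
    (h : fischer n p p = 0) : p = 0 := by
  rw [fischer_self] at h
  have h' : (∑ a ∈ p.support,
      (∏ i : Fin n, (a i).factorial : ℕ) * Complex.normSq (coeff a p) : ℝ) = 0 := by
    exact_mod_cast h
  have hzero : ∀ a ∈ p.support, coeff a p = 0 := by
    intro a ha
    have hterm := (Finset.sum_eq_zero_iff_of_nonneg (fun b _ => mul_nonneg (Nat.cast_nonneg _) (Complex.normSq_nonneg _))).mp h' a ha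
    have hfac : (0:ℝ) < ((∏ i : Fin n, (a i).factorial : ℕ) : ℝ) := by
      have : 0 < ∏ i : Fin n, (a i).factorial :=
        Finset.prod_pos (fun i _ => Nat.factorial_pos _)
      exact_mod_cast this
    have : Complex.normSq (coeff a p) = 0 := by
      by_contra hc
      have : Complex.normSq (coeff a p) > 0 :=
        lt_of_le_of_ne (Complex.normSq_nonneg _) (Ne.symm hc)
      nlinarith
    exact Complex.normSq_eq_zero.mp this
  ext a
  rcases Finset.decidableMem a p.support with ha | ha
  · simp [MvPolynomial.notMem_support_iff.mp ha]
  · simp [hzero a ha]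

lemma totalDegree_monOp_monomial_le (n : ℕ) (a b : Fin n →₀ ℕ) (c : ℂ) :
    (monOp n a (monomial b c)).totalDegree ≤
      (b.sum fun _ k => k) - (a.sum fun _ k => k) := by
  rw [monOp_monomial]
  rcases eq_or_ne (∏ i : Fin n, (b i).descFactorial (a i)) 0 with hz | hz
  · rw [hz]; simp
  · have hle : ∀ i : Fin n, a i ≤ b i := by
      intro i
      by_contra hlt
      exact hz (Finset.prod_eq_zero (Finset.mem_univ i)
        (Nat.descFactorial_eq_zero_iff_lt.mpr (by omega)))
    refine le_trans (totalDegree_smul_le _ _) ?_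
    refine le_trans (totalDegree_monomial_le _ _) ?_
    rw [Finsupp.sum_fintype _ _ (fun _ => rfl), Finsupp.sum_fintype _ _ (fun _ => rfl),
      Finsupp.sum_fintype _ _ (fun _ => rfl)]
    have : ∀ i : Fin n, (b - a) i = b i - a i := fun i => Finsupp.tsub_apply b a i
    simp only [this]
    simp only [id_eq]
    rw [Finset.sum_tsub_distrib _ (fun i _ => hle i)]

lemma degree_eq_of_mem_support_homogeneous {n m : ℕ} {q : MvPolynomial (Fin n) ℂ}
    (hq : q.IsHomogeneous m) {a : Fin n →₀ ℕ} (ha : a ∈ q.support) :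
    (a.sum fun _ k => k) = m := by
  have := hq (mem_support_iff.mp ha)
  rw [show (Finsupp.weight 1 : (Fin n →₀ ℕ) →+ ℕ) = Finsupp.weight (fun _ => 1) from rfl,
    ← Finsupp.degree_eq_weight_one] at this
  rw [← this, Finsupp.degree_apply, Finsupp.sum]

lemma totalDegree_diffOp_le {n m : ℕ} {q : MvPolynomial (Fin n) ℂ}
    (hq : q.IsHomogeneous m) (f : MvPolynomial (Fin n) ℂ) :
    (diffOp n (pstar n q) f).totalDegree ≤ f.totalDegree - m := by
  rw [diffOp, support_pstar, LinearMap.sum_apply]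
  refine le_trans (totalDegree_finset_sum _ _) (Finset.sup_le ?_)
  intro a ha
  rw [LinearMap.smul_apply]
  refine le_trans (totalDegree_smul_le _ _) ?_
  have hf : (monOp n a) f = ∑ b ∈ f.support, monOp n a (monomial b (coeff b f)) := by
    conv_lhs => rw [f.as_sum]
    rw [map_sum]
  rw [hf]
  refine le_trans (totalDegree_finset_sum _ _) (Finset.sup_le ?_)
  intro b hb
  refine le_trans (totalDegree_monOp_monomial_le n a b _) ?_
  rw [degree_eq_of_mem_support_homogeneous hq ha]
  exact Nat.sub_le_sub_right (le_totalDegree hb) m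

lemma fischer_zero_right (n : ℕ) (p : MvPolynomial (Fin n) ℂ) : fischer n p 0 = 0 := by
  simp [fischer]

lemma key_lemma (n : ℕ) (q a : MvPolynomial (Fin n) ℂ)
    (h : diffOp n (pstar n q) (q * a) = 0) : q * a = 0 := by
  apply fischer_self_eq_zero
  rw [fischer_adjoint, h, fischer_zero_right]

/-- Fischer decomposition: for a homogeneous polynomial `q` of degree `m ≥ 1`,
`ℂ[x] = q·ℂ[x] ⊕ ker q*(∂_x)` orthogonally; equivalently every polynomial `p` can be
written as `p = q·p₁ + h` with `q*(∂_x) h = 0`, the two summands `q·p₁` and `h` being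
unique, and the summands are orthogonal for the Fischer inner product. -/
theorem fischer_pair_decomposition (n : ℕ) (m : ℕ) (hm : 1 ≤ m)
    (q : MvPolynomial (Fin n) ℂ) (hq : q.IsHomogeneous m) :
    (∀ p : MvPolynomial (Fin n) ℂ,
      ∃ p₁ h : MvPolynomial (Fin n) ℂ,
        diffOp n (pstar n q) h = 0 ∧ p = q * p₁ + h ∧
        ∀ p₁' h' : MvPolynomial (Fin n) ℂ,
          diffOp n (pstar n q) h' = 0 → p = q * p₁' + h' → q * p₁' = q * p₁ ∧ h' = h) ∧
    (∀ p₁ h : MvPolynomial (Fin n) ℂ,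
      diffOp n (pstar n q) h = 0 → fischer n (q * p₁) h = 0) := by
  constructor
  · intro p
    rcases eq_or_ne q 0 with rfl | hq0
    · refine ⟨0, p, by simp [diffOp, pstar], by simp, ?_⟩
      intro p₁' h' _ heq
      constructor
      · simp
      · simpa using heq.symm
    · set N := p.totalDegree with hN
      set V := restrictTotalDegree (Fin n) ℂ N with hV
      have memE : ∀ a : V, diffOp n (pstar n q) (q * ↑a) ∈ V := by
        intro a
        refine (mem_restrictTotalDegree (Fin n) N _).mpr ?_
        have h1 : (q * (a : MvPolynomial (Fin n) ℂ)).totalDegree ≤ m + N := by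
          refine le_trans (totalDegree_mul _ _) ?_
          have := (mem_restrictTotalDegree (Fin n) N (a : MvPolynomial (Fin n) ℂ)).mp a.2
          have := hq.totalDegree_le
          omega
        have h2 := totalDegree_diffOp_le hq (q * (a : MvPolynomial (Fin n) ℂ))
        omega
      let E : V →ₗ[ℂ] V :=
        { toFun := fun a => ⟨diffOp n (pstar n q) (q * (a : MvPolynomial (Fin n) ℂ)), memE a⟩
          map_add' := by
            intro a b
            apply Subtype.ext
            show diffOp n (pstar n q) (q * (↑a + ↑b)) = _
            rw [mul_add, map_add]
            rfl
          map_smul' := by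
            intro c a
            apply Subtype.ext
            show diffOp n (pstar n q) (q * (c • ↑a)) = _
            rw [mul_smul_comm, map_smul]
            rfl }
      have hinj : Function.Injective E := by
        intro a b hab
        have : diffOp n (pstar n q) (q * (↑a - ↑b)) = 0 := by
          rw [mul_sub, map_sub]
          have := congrArg (Subtype.val) hab
          simpa [E, sub_eq_zero] using this
        have hzero := key_lemma n q _ this
        rcases mul_eq_zero.mp hzero with h | h
        · exact absurd h hq0
        · apply Subtype.ext
          rw [← sub_eq_zero]
          exact h
      have hsurj : Function.Surjective E := LinearMap.injective_iff_surjective.mp hinj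
      have hDp : diffOp n (pstar n q) p ∈ V := by
        refine (mem_restrictTotalDegree (Fin n) N _).mpr ?_
        have := totalDegree_diffOp_le hq p
        omega
      obtain ⟨a, haE⟩ := hsurj ⟨diffOp n (pstar n q) p, hDp⟩
      have haE' : diffOp n (pstar n q) (q * ↑a) = diffOp n (pstar n q) p :=
        congrArg Subtype.val haE
      refine ⟨↑a, p - q * ↑a, ?_, by ring, ?_⟩
      · rw [map_sub, haE', sub_self]
      · intro p₁' h' hD' heq
        have hx : q * (p₁' - ↑a) = (p - q * ↑a) - h' := by
          rw [mul_sub]; linear_combination -heq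
        have hDx : diffOp n (pstar n q) (q * (p₁' - ↑a)) = 0 := by
          rw [hx, map_sub, map_sub, haE', sub_self, hD', zero_sub, neg_zero]
        have := key_lemma n q _ hDx
        rw [mul_sub, sub_eq_zero] at this
        exact ⟨this, by linear_combination -heq - this⟩
  · intro p₁ h hD
    rw [fischer_adjoint, hD, fischer_zero_right]
end

section
/- Let ℂ[x,y] = ℂ[x_1,...,x_n,y_1,...,y_n], q = Σ_{i=1}^n x_i y_i, and □ = Σ_{i=1}^n ∂_{x_i}∂_{y_i}. Denote by H = ker □ the space of harmonic polynomials. Then the multiplication map ℂ[q] ⊗ H → ℂ[x,y] is a linear isomorphism, i.e., every polynomial p ∈ ℂ[x,y] can be written uniquely as p = Σ_{k≥0} q^k h_k with h_k ∈ H (Fischer decomposition for sl(n,ℂ)). -/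
open MvPolynomial

/-- Polynomial algebra in `x_1,…,x_n, y_1,…,y_n`. -/
abbrev PolyXY (n : ℕ) : Type := MvPolynomial (Fin n ⊕ Fin n) ℂ

/-- Multiplication by `x_i`. -/
noncomputable def opX (n : ℕ) (i : Fin n) : Module.End ℂ (PolyXY n) :=
  LinearMap.mulLeft ℂ (X (Sum.inl i))

/-- Multiplication by `y_i`. -/
noncomputable def opY (n : ℕ) (i : Fin n) : Module.End ℂ (PolyXY n) :=
  LinearMap.mulLeft ℂ (X (Sum.inr i))

/-- `∂_{x_i}`. -/
noncomputable def opDx (n : ℕ) (i : Fin n) : Module.End ℂ (PolyXY n) :=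
  (pderiv (Sum.inl i)).toLinearMap

/-- `∂_{y_i}`. -/
noncomputable def opDy (n : ℕ) (i : Fin n) : Module.End ℂ (PolyXY n) :=
  (pderiv (Sum.inr i)).toLinearMap

/-- `□ = Σ ∂_{x_i} ∂_{y_i}`. -/
noncomputable def opBox (n : ℕ) : Module.End ℂ (PolyXY n) :=
  ∑ i, opDx n i * opDy n i

/-- `E_x = Σ x_i ∂_{x_i}`. -/
noncomputable def opEx (n : ℕ) : Module.End ℂ (PolyXY n) :=
  ∑ i, opX n i * opDx n i

/-- `E_y = Σ y_i ∂_{y_i}`. -/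
noncomputable def opEy (n : ℕ) : Module.End ℂ (PolyXY n) :=
  ∑ i, opY n i * opDy n i

/-- The invariant quadratic polynomial `q = Σ x_i y_i`. -/
noncomputable def polyQ (n : ℕ) : PolyXY n :=
  ∑ i, X (Sum.inl i) * X (Sum.inr i)

/-- The action `π(A) = Σ_{i,j} a_{ij} (x_i ∂_{x_j} − y_j ∂_{y_i})` of a matrix `A`. -/
noncomputable def opPi (n : ℕ) (A : Matrix (Fin n) (Fin n) ℂ) : Module.End ℂ (PolyXY n) :=
  ∑ i, ∑ j, A i j • (opX n i * opDx n j - opY n j * opDy n i)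

namespace FischerAux

noncomputable def opE (n : ℕ) : Module.End ℂ (PolyXY n) := opEx n + opEy n

variable {n : ℕ}

lemma sub_single_add_single {v : Fin n ⊕ Fin n} {u : (Fin n ⊕ Fin n) →₀ ℕ} (h : u v ≠ 0) :
    u - Finsupp.single v 1 + Finsupp.single v 1 = u := by
  ext w
  by_cases hw : w = v
  · subst hw
    simp [Finsupp.tsub_apply, Nat.sub_add_cancel (Nat.one_le_iff_ne_zero.2 h)]
  · simp [Finsupp.tsub_apply, Finsupp.single_apply, Ne.symm hw]

lemma coeff_pderiv (v : Fin n ⊕ Fin n) (m : (Fin n ⊕ Fin n) →₀ ℕ) (p : PolyXY n) :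
    coeff m (pderiv v p) = ((m v : ℂ) + 1) * coeff (m + Finsupp.single v 1) p := by
  induction p using MvPolynomial.induction_on' with
  | add p q hp hq => simp only [map_add, coeff_add, hp, hq]; ring
  | monomial u c =>
    rw [pderiv_monomial, coeff_monomial, coeff_monomial]
    by_cases h : u v = 0
    · have h1 : u - Finsupp.single v 1 = u := by
        ext w
        by_cases hw : w = v
        · subst hw; simp [Finsupp.tsub_apply, h]
        · simp [Finsupp.tsub_apply, Finsupp.single_apply, Ne.symm hw]
      have h2 : u ≠ m + Finsupp.single v 1 := by
        intro he; rw [he] at h; simp at h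
      rw [h1, if_neg h2, mul_zero]
      split_ifs with h3
      · rw [h, Nat.cast_zero, mul_zero]
      · rfl
    · have key : u - Finsupp.single v 1 = m ↔ u = m + Finsupp.single v 1 := by
        constructor
        · rintro rfl; exact (sub_single_add_single h).symm
        · rintro rfl; ext w
          by_cases hw : w = v
          · subst hw; simp [Finsupp.tsub_apply]
          · simp [Finsupp.tsub_apply, Finsupp.single_apply, Ne.symm hw]
      split_ifs with h1 h2 h2
      · -- u - single = m, u = m + single
        have : u v = m v + 1 := by rw [h2]; simp
        rw [this]; push_cast; ring
      · exact absurd (key.1 h1) h2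
      · exact absurd (key.2 h2) h1
      · rw [mul_zero]

lemma opE_apply (p : PolyXY n) :
    opE n p = ∑ v : Fin n ⊕ Fin n, X v * pderiv v p := by
  simp [opE, opEx, opEy, opX, opY, opDx, opDy, LinearMap.sum_apply, Module.End.mul_apply,
    LinearMap.mulLeft_apply, Fintype.sum_sum_type]

lemma coeff_XD (v : Fin n ⊕ Fin n) (m : (Fin n ⊕ Fin n) →₀ ℕ) (p : PolyXY n) :
    coeff m (X v * pderiv v p) = (m v : ℂ) * coeff m p := by
  classical
  rw [coeff_X_mul']
  by_cases h : v ∈ m.support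
  · rw [if_pos h, coeff_pderiv]
    have hv : m v ≠ 0 := Finsupp.mem_support_iff.1 h
    rw [sub_single_add_single hv]
    congr 1
    have h2 := Finsupp.tsub_apply m (Finsupp.single v 1) v
    rw [Finsupp.single_eq_same] at h2
    rw [h2, Nat.cast_sub (Nat.one_le_iff_ne_zero.2 hv)]
    push_cast; ring
  · rw [if_neg h]
    have : m v = 0 := Finsupp.notMem_support_iff.1 h
    rw [this, Nat.cast_zero, zero_mul]

lemma degree_eq_sum_univ (m : (Fin n ⊕ Fin n) →₀ ℕ) :
    Finsupp.degree m = ∑ v : Fin n ⊕ Fin n, m v := by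
  rw [Finsupp.degree]
  exact Finset.sum_subset (Finset.subset_univ _)
    (fun x _ hx => Finsupp.notMem_support_iff.1 hx)

lemma coeff_opE (m : (Fin n ⊕ Fin n) →₀ ℕ) (p : PolyXY n) :
    coeff m (opE n p) = ((Finsupp.degree m : ℕ) : ℂ) * coeff m p := by
  rw [opE_apply, coeff_sum]
  simp_rw [coeff_XD]
  rw [← Finset.sum_mul, degree_eq_sum_univ]
  push_cast
  rfl

lemma opBox_apply (p : PolyXY n) :
    opBox n p = ∑ i : Fin n, pderiv (Sum.inl i) (pderiv (Sum.inr i) p) := by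
  simp [opBox, opDx, opDy, LinearMap.sum_apply, Module.End.mul_apply]

lemma coeff_opBox (m : (Fin n ⊕ Fin n) →₀ ℕ) (p : PolyXY n) :
    coeff m (opBox n p) = ∑ i : Fin n,
      (((m (Sum.inl i) : ℂ) + 1) * ((m (Sum.inr i) : ℂ) + 1)) *
        coeff (m + Finsupp.single (Sum.inl i) 1 + Finsupp.single (Sum.inr i) 1) p := by
  rw [opBox_apply, coeff_sum]
  refine Finset.sum_congr rfl fun i _ => ?_
  rw [coeff_pderiv, coeff_pderiv]
  have h2 := Finsupp.add_apply m (Finsupp.single (Sum.inl i) 1) (Sum.inr i)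
  rw [Finsupp.single_eq_of_ne (by simp), add_zero] at h2
  rw [h2]; ring

lemma degree_add (a b : (Fin n ⊕ Fin n) →₀ ℕ) :
    Finsupp.degree (a + b) = Finsupp.degree a + Finsupp.degree b := by
  simp [degree_eq_sum_univ, Finset.sum_add_distrib]

lemma degree_single (v : Fin n ⊕ Fin n) :
    Finsupp.degree (Finsupp.single v 1) = 1 := by
  simp [degree_eq_sum_univ, Finsupp.single_apply]

lemma box_opE (p : PolyXY n) :
    opBox n (opE n p) = opE n (opBox n p) + (2 : ℂ) • opBox n p := by
  apply MvPolynomial.ext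
  intro m
  rw [coeff_add, coeff_smul, coeff_opBox, coeff_opE, coeff_opBox]
  simp_rw [coeff_opE, degree_add, degree_single]
  rw [smul_eq_mul, Finset.mul_sum, Finset.mul_sum, ← Finset.sum_add_distrib]
  refine Finset.sum_congr rfl fun i _ => ?_
  push_cast
  ring

lemma box_shift_harmonic {h : PolyXY n} (hh : opBox n h = 0) (c : ℂ) :
    opBox n (opE n h + c • h) = 0 := by
  rw [map_add, map_smul, box_opE, hh]
  simp

lemma opE_shift_eq_zero {h : PolyXY n} {c : ℕ} (hc : 1 ≤ c)
    (heq : opE n h + (c : ℂ) • h = 0) : h = 0 := by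
  apply MvPolynomial.ext
  intro m
  have := congrArg (coeff m) heq
  rw [coeff_add, coeff_smul, coeff_opE, coeff_zero, smul_eq_mul, ← add_mul] at this
  rw [coeff_zero]
  have hne : ((Finsupp.degree m : ℕ) : ℂ) + (c : ℂ) ≠ 0 := by
    have : ((Finsupp.degree m + c : ℕ) : ℂ) ≠ 0 := Nat.cast_ne_zero.2 (by omega)
    push_cast at this; exact this
  exact (mul_eq_zero.1 this).resolve_left hne

lemma pderiv_polyQ_inl (j : Fin n) :
    pderiv (Sum.inl j) (polyQ n) = X (Sum.inr j) := by
  rw [polyQ, map_sum, Finset.sum_eq_single j]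
  · rw [pderiv_mul, pderiv_X_self, pderiv_X_of_ne (by simp), one_mul, mul_zero, add_zero]
  · intro i _ hij
    rw [pderiv_mul, pderiv_X_of_ne (by simp [hij]), pderiv_X_of_ne (by simp), zero_mul,
      mul_zero, add_zero]
  · intro h; exact absurd (Finset.mem_univ j) h

lemma pderiv_polyQ_inr (j : Fin n) :
    pderiv (Sum.inr j) (polyQ n) = X (Sum.inl j) := by
  rw [polyQ, map_sum, Finset.sum_eq_single j]
  · rw [pderiv_mul, pderiv_X_of_ne (by simp), pderiv_X_self, zero_mul, mul_one, zero_add]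
  · intro i _ hij
    rw [pderiv_mul, pderiv_X_of_ne (by simp), pderiv_X_of_ne (by simp [hij]), zero_mul,
      mul_zero, add_zero]
  · intro h; exact absurd (Finset.mem_univ j) h

lemma box_q_mul (p : PolyXY n) :
    opBox n (polyQ n * p) = (n : ℂ) • p + opE n p + polyQ n * opBox n p := by
  rw [opBox_apply]
  have key : ∀ i : Fin n, pderiv (Sum.inl i) (pderiv (Sum.inr i) (polyQ n * p)) =
      p + X (Sum.inl i) * pderiv (Sum.inl i) p + X (Sum.inr i) * pderiv (Sum.inr i) p
        + polyQ n * pderiv (Sum.inl i) (pderiv (Sum.inr i) p) := by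
    intro i
    rw [pderiv_mul, pderiv_polyQ_inr, map_add, pderiv_mul, pderiv_mul, pderiv_polyQ_inl,
      pderiv_X_self, one_mul]
    ring
  rw [Finset.sum_congr rfl (fun i _ => key i), Finset.sum_add_distrib, Finset.sum_add_distrib,
    Finset.sum_add_distrib, Finset.sum_const, Finset.card_univ, Fintype.card_fin,
    ← Finset.mul_sum, ← opBox_apply]
  rw [opE_apply, Fintype.sum_sum_type, Nat.cast_smul_eq_nsmul]
  abel

lemma opE_mul (f g : PolyXY n) :
    opE n (f * g) = opE n f * g + f * opE n g := by
  rw [opE_apply, opE_apply, opE_apply, Finset.sum_mul, Finset.mul_sum,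
    ← Finset.sum_add_distrib]
  refine Finset.sum_congr rfl fun v _ => ?_
  rw [pderiv_mul]
  ring

lemma opE_polyQ : opE n (polyQ n) = polyQ n + polyQ n := by
  rw [opE_apply, Fintype.sum_sum_type]
  simp_rw [pderiv_polyQ_inl, pderiv_polyQ_inr]
  have h1 : ∑ i : Fin n, X (Sum.inr i) * X (Sum.inl i) = polyQ n := by
    rw [polyQ]; exact Finset.sum_congr rfl fun i _ => mul_comm _ _
  rw [h1, ← polyQ]

lemma opE_qpow_mul (k : ℕ) (h : PolyXY n) :
    opE n (polyQ n ^ k * h) = (2 * (k : ℂ)) • (polyQ n ^ k * h) + polyQ n ^ k * opE n h := by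
  induction k with
  | zero => simp
  | succ k ih =>
    rw [pow_succ, mul_comm (polyQ n ^ k) (polyQ n), mul_assoc, opE_mul, ih, opE_polyQ]
    simp only [smul_eq_C_mul]
    push_cast
    try simp only [map_add, map_mul, map_zero, map_one, map_ofNat]
    ring

lemma box_qpow {h : PolyXY n} (hh : opBox n h = 0) (k : ℕ) :
    opBox n (polyQ n ^ (k + 1) * h) =
      ((k : ℂ) + 1) • (polyQ n ^ k * (opE n h + ((n : ℂ) + (k : ℂ)) • h)) := by
  induction k with
  | zero =>
    rw [pow_one, pow_zero, one_mul, box_q_mul, hh, mul_zero, add_zero]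
    simp only [smul_eq_C_mul]
    push_cast
    try simp only [map_add, map_mul, map_zero, map_one, map_ofNat]
    ring
  | succ k ih =>
    rw [pow_succ, mul_comm (polyQ n ^ (k + 1)) (polyQ n), mul_assoc, box_q_mul, ih,
      opE_qpow_mul]
    simp only [smul_eq_C_mul]
    push_cast
    try simp only [map_add, map_mul, map_zero, map_one, map_ofNat]
    ring

lemma opE_hc (d : ℕ) (p : PolyXY n) :
    opE n (homogeneousComponent d p) = (d : ℂ) • homogeneousComponent d p := by
  apply MvPolynomial.ext
  intro m
  rw [coeff_opE, coeff_smul, coeff_homogeneousComponent, smul_eq_mul]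
  split_ifs with hd
  · rw [hd]
  · rw [mul_zero, mul_zero]

lemma box_hc {p : PolyXY n} (hp : opBox n p = 0) (d : ℕ) :
    opBox n (homogeneousComponent d p) = 0 := by
  apply MvPolynomial.ext
  intro m
  rw [coeff_opBox, coeff_zero]
  simp_rw [coeff_homogeneousComponent, degree_add, degree_single]
  by_cases hd : Finsupp.degree m + 1 + 1 = d
  · simp only [hd, if_pos rfl, if_true]
    have := congrArg (coeff m) hp
    rw [coeff_opBox, coeff_zero] at this
    exact this
  · simp only [hd, if_false, mul_zero, Finset.sum_const_zero]

lemma solve {g : PolyXY n} (hg : opBox n g = 0) (c : ℕ) (hc : 1 ≤ c) :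
    ∃ f : PolyXY n, opBox n f = 0 ∧ opE n f + (c : ℂ) • f = g := by
  refine ⟨∑ d ∈ Finset.range (g.totalDegree + 1),
    ((d : ℂ) + (c : ℂ))⁻¹ • homogeneousComponent d g, ?_, ?_⟩
  · rw [map_sum]
    refine Finset.sum_eq_zero fun d _ => ?_
    rw [map_smul, box_hc hg d, smul_zero]
  · rw [map_sum]
    simp_rw [map_smul, opE_hc]
    rw [Finset.smul_sum, ← Finset.sum_add_distrib]
    have : ∀ d ∈ Finset.range (g.totalDegree + 1),
        ((d : ℂ) + (c : ℂ))⁻¹ • ((d : ℂ) • homogeneousComponent d g) +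
          (c : ℂ) • (((d : ℂ) + (c : ℂ))⁻¹ • homogeneousComponent d g) =
          homogeneousComponent d g := by
      intro d _
      rw [smul_smul, smul_smul, ← add_smul]
      have hne : (d : ℂ) + (c : ℂ) ≠ 0 := by
        have : ((d + c : ℕ) : ℂ) ≠ 0 := Nat.cast_ne_zero.2 (by omega)
        push_cast at this; exact this
      rw [show ((d : ℂ) + (c : ℂ))⁻¹ * (d : ℂ) + (c : ℂ) * ((d : ℂ) + (c : ℂ))⁻¹ = 1 by
        field_simp]
      rw [one_smul]
    rw [Finset.sum_congr rfl this, sum_homogeneousComponent]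

lemma td_box_lt {p : PolyXY n} (hb : opBox n p ≠ 0) :
    (opBox n p).totalDegree < p.totalDegree := by
  have key : ∀ m : (Fin n ⊕ Fin n) →₀ ℕ, m ∈ (opBox n p).support →
      Finsupp.degree m + 2 ≤ p.totalDegree := by
    intro m hm
    have hc : coeff m (opBox n p) ≠ 0 := Finsupp.mem_support_iff.1 hm
    rw [coeff_opBox] at hc
    obtain ⟨i, _, hi⟩ := Finset.exists_ne_zero_of_sum_ne_zero hc
    have hcoef : coeff (m + Finsupp.single (Sum.inl i) 1 + Finsupp.single (Sum.inr i) 1) p ≠ 0 := by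
      intro h0; rw [h0, mul_zero] at hi; exact hi rfl
    have hmem := Finsupp.mem_support_iff.2 hcoef
    have := le_totalDegree hmem
    have hdeg : ((m + Finsupp.single (Sum.inl i) 1 + Finsupp.single (Sum.inr i) 1).sum
        fun _ e => e) = Finsupp.degree m + 2 := by
      show Finsupp.degree _ = _
      rw [degree_add, degree_add, degree_single, degree_single]
    omega
  obtain ⟨m0, hm0⟩ : ∃ m, m ∈ (opBox n p).support := by
    by_contra hne
    push_neg at hne
    exact hb (by ext m; exact Finsupp.notMem_support_iff.1 (hne m))
  have hpos : 0 < p.totalDegree := by have := key m0 hm0; omega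
  rw [totalDegree]
  rw [Finset.sup_lt_iff (by exact hpos)]
  intro m hm
  have := key m hm
  show Finsupp.degree m < p.totalDegree
  omega

lemma exist (hn : 1 ≤ n) : ∀ d : ℕ, ∀ p : PolyXY n, p.totalDegree ≤ d →
    ∃ (N : ℕ) (h : ℕ → PolyXY n), (∀ k, opBox n (h k) = 0) ∧ (∀ k, N ≤ k → h k = 0) ∧
      p = ∑ k ∈ Finset.range N, polyQ n ^ k * h k := by
  intro d
  induction d using Nat.strong_induction_on with
  | _ d IH =>
    intro p hp
    by_cases hb : opBox n p = 0
    · refine ⟨1, fun k => if k = 0 then p else 0, ?_, ?_, ?_⟩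
      · intro k; by_cases hk : k = 0 <;> simp [hk, hb]
      · intro k hk; simp [Nat.one_le_iff_ne_zero.1 hk]
      · simp
    · have hlt := td_box_lt hb
      obtain ⟨N, g, hg1, hg2, hg3⟩ := IH (opBox n p).totalDegree (lt_of_lt_of_le hlt hp)
        (opBox n p) le_rfl
      have hchoice : ∀ k : ℕ, ∃ f : PolyXY n, opBox n f = 0 ∧
          opE n f + ((n + k : ℕ) : ℂ) • f = ((k : ℂ) + 1)⁻¹ • g k := by
        intro k
        exact solve (g := ((k : ℂ) + 1)⁻¹ • g k)
          (by rw [map_smul, hg1, smul_zero]) (n + k) (by omega)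
      choose f hf1 hf2 using hchoice
      have hterm : ∀ k : ℕ, opBox n (polyQ n ^ (k + 1) * f k) = polyQ n ^ k * g k := by
        intro k
        have := box_qpow (hf1 k) k
        rw [this]
        have hcast : ((n : ℂ) + (k : ℂ)) = ((n + k : ℕ) : ℂ) := by push_cast; ring
        rw [hcast, hf2 k, mul_smul_comm, smul_smul]
        have hk1 : ((k : ℂ) + 1) ≠ 0 := by
          have : ((k + 1 : ℕ) : ℂ) ≠ 0 := Nat.cast_ne_zero.2 (by omega)
          push_cast at this; exact this
        rw [mul_inv_cancel₀ hk1, one_smul]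
      have hfz : ∀ k, N ≤ k → f k = 0 := by
        intro k hk
        refine opE_shift_eq_zero (c := n + k) (by omega) ?_
        rw [hf2 k, hg2 k hk, smul_zero]
      set r : PolyXY n := p - ∑ j ∈ Finset.range N, polyQ n ^ (j + 1) * f j with hr
      have hrharm : opBox n r = 0 := by
        rw [hr, map_sub, map_sum]
        rw [Finset.sum_congr rfl fun j _ => hterm j, ← hg3, sub_self]
      refine ⟨N + 1, fun k => match k with | 0 => r | (j + 1) => f j, ?_, ?_, ?_⟩
      · intro k
        match k with
        | 0 => exact hrharm
        | (j + 1) => exact hf1 j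
      · intro k hk
        match k with
        | 0 => omega
        | (j + 1) => exact hfz j (by omega)
      · rw [Finset.sum_range_succ']
        simp only [pow_zero, one_mul]
        rw [hr]
        ring
  
lemma uniq (hn : 1 ≤ n) : ∀ N : ℕ, ∀ h : ℕ → PolyXY n, (∀ k, opBox n (h k) = 0) →
    (∀ k, N ≤ k → h k = 0) → (∑ k ∈ Finset.range N, polyQ n ^ k * h k) = 0 →
    ∀ k, h k = 0 := by
  intro N
  induction N with
  | zero => exact fun h _ hz _ k => hz k (Nat.zero_le k)
  | succ N IH =>
    intro h hharm hvan hsum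
    have h1 : ∑ k ∈ Finset.range N, polyQ n ^ k *
        (((k : ℂ) + 1) • (opE n (h (k + 1)) + ((n : ℂ) + (k : ℂ)) • h (k + 1))) = 0 := by
      have hb := congrArg (opBox n) hsum
      rw [map_sum, map_zero, Finset.sum_range_succ'] at hb
      rw [pow_zero, one_mul, hharm 0, add_zero] at hb
      rw [← hb]
      refine Finset.sum_congr rfl fun k _ => ?_
      rw [box_qpow (hharm (k + 1)) k, mul_smul_comm]
    set h' : ℕ → PolyXY n := fun k =>
      ((k : ℂ) + 1) • (opE n (h (k + 1)) + ((n : ℂ) + (k : ℂ)) • h (k + 1)) with hh'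
    have hz' : ∀ k, h' k = 0 := by
      refine IH h' (fun k => ?_) (fun k hk => ?_) h1
      · rw [hh']
        simp only
        rw [map_smul, box_shift_harmonic (hharm (k + 1)), smul_zero]
      · rw [hh']
        simp only
        rw [hvan (k + 1) (by omega), map_zero, smul_zero, add_zero, smul_zero]
    have hsucc : ∀ k, h (k + 1) = 0 := by
      intro k
      have := hz' k
      rw [hh'] at this
      simp only at this
      have hk1 : ((k : ℂ) + 1) ≠ 0 := by
        have : ((k + 1 : ℕ) : ℂ) ≠ 0 := Nat.cast_ne_zero.2 (by omega)
        push_cast at this; exact this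
      have h2 : opE n (h (k + 1)) + ((n : ℂ) + (k : ℂ)) • h (k + 1) = 0 :=
        (smul_eq_zero.1 this).resolve_left hk1
      refine opE_shift_eq_zero (c := n + k) (by omega) ?_
      rw [show ((n + k : ℕ) : ℂ) = (n : ℂ) + (k : ℂ) by push_cast; ring]
      exact h2
    have h0 : h 0 = 0 := by
      rw [Finset.sum_range_succ'] at hsum
      rw [Finset.sum_congr rfl (fun k _ => by rw [hsucc k, mul_zero]),
        Finset.sum_const_zero, zero_add, pow_zero, one_mul] at hsum
      exact hsum
    intro k
    match k with
    | 0 => exact h0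
    | (j + 1) => exact hsucc j

lemma finsupp_sum_eq (h : ℕ →₀ PolyXY n) (M : ℕ) (hs : h.support ⊆ Finset.range M) :
    (h.sum fun k hk => polyQ n ^ k * hk) = ∑ k ∈ Finset.range M, polyQ n ^ k * h k :=
  Finsupp.sum_of_support_subset h hs _ (fun k _ => by rw [mul_zero])

lemma uniq' (hn : 1 ≤ n) (h₁ h₂ : ℕ →₀ PolyXY n)
    (H1 : ∀ k, opBox n (h₁ k) = 0) (H2 : ∀ k, opBox n (h₂ k) = 0)
    (he : (h₁.sum fun k hk => polyQ n ^ k * hk) = h₂.sum fun k hk => polyQ n ^ k * hk) :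
    h₁ = h₂ := by
  classical
  set M := (h₁.support ∪ h₂.support).sup id + 1 with hM
  have hsub1 : h₁.support ⊆ Finset.range M := by
    intro k hk
    have := Finset.le_sup (f := id) (Finset.mem_union_left h₂.support hk)
    simp only [id] at this
    exact Finset.mem_range.2 (by omega)
  have hsub2 : h₂.support ⊆ Finset.range M := by
    intro k hk
    have := Finset.le_sup (f := id) (Finset.mem_union_right h₁.support hk)
    simp only [id] at this
    exact Finset.mem_range.2 (by omega)
  have hvan : ∀ k, M ≤ k → h₁ k - h₂ k = 0 := by
    intro k hk
    have e1 : h₁ k = 0 := by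
      by_contra hne
      have := hsub1 (Finsupp.mem_support_iff.2 hne)
      rw [Finset.mem_range] at this; omega
    have e2 : h₂ k = 0 := by
      by_contra hne
      have := hsub2 (Finsupp.mem_support_iff.2 hne)
      rw [Finset.mem_range] at this; omega
    rw [e1, e2, sub_zero]
  have hsum : ∑ k ∈ Finset.range M, polyQ n ^ k * (h₁ k - h₂ k) = 0 := by
    have e1 := finsupp_sum_eq h₁ M hsub1
    have e2 := finsupp_sum_eq h₂ M hsub2
    rw [e1, e2] at he
    simp_rw [mul_sub, Finset.sum_sub_distrib]
    rw [he, sub_self]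
  have hz := uniq hn M (fun k => h₁ k - h₂ k)
    (fun k => by rw [map_sub, H1 k, H2 k, sub_zero]) hvan hsum
  refine Finsupp.ext fun k => ?_
  exact sub_eq_zero.1 (hz k)

end FischerAux

/-- Fischer decomposition for `sl(n,ℂ)`:
every polynomial `p ∈ ℂ[x,y]` is uniquely `p = Σ_k q^k h_k` with each `h_k` harmonic. -/
theorem fischer_decomposition_sl (n : ℕ) (hn : 2 ≤ n) (p : PolyXY n) :
    ∃! h : ℕ →₀ PolyXY n,
      (∀ k : ℕ, opBox n (h k) = 0) ∧ p = h.sum fun k hk => polyQ n ^ k * hk := by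
  classical
  obtain ⟨N, h, hh1, hh2, hh3⟩ := FischerAux.exist (n := n) (by omega) p.totalDegree p le_rfl
  set h₁ : ℕ →₀ PolyXY n := Finsupp.onFinset (Finset.range N) h (fun k hk => by
    rw [Finset.mem_range]
    by_contra hlt
    exact hk (hh2 k (by omega))) with hh₁
  have happ : ∀ k, h₁ k = h k := fun k => rfl
  have hsupp : h₁.support ⊆ Finset.range N := Finsupp.support_onFinset_subset
  have hsum1 : (h₁.sum fun k hk => polyQ n ^ k * hk) = p := by
    rw [FischerAux.finsupp_sum_eq h₁ N hsupp]
    exact (hh3.trans (Finset.sum_congr rfl fun k _ => by rw [happ k])).symm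
  refine ⟨h₁, ⟨fun k => by rw [happ k]; exact hh1 k, hsum1.symm⟩, ?_⟩
  intro h₂ ⟨H1, H2⟩
  exact FischerAux.uniq' (by omega) h₂ h₁ H1 (fun k => by rw [happ k]; exact hh1 k)
    (H2.symm.trans hsum1.symm)
end
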